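/- Let E = F(√D) be the unramified quadratic extension of F, fix an integer k ≥ 1, and let K̃ = {g ∈ GL₂(O_E) : g ≡ I mod ϖᵏO_E} (all four entries of g − I lie in ϖᵏO_E). Then for a₁ ∈ Fˣ and m ∈ F: [[1,0],[√D,1]]·[[a₁,m],[0,1]] ∈ B(E)·[[0,1],[−1,−1/√D]]·K̃ if and only if a₁ ∈ 1+ϖᵏO_F and m ∈ ϖᵏO_F. -/
import Mathlib

def Sm {E : Type*} [Field E] (v : E → ℤ) (k : ℕ) (x : E) : Prop :=
  x = 0 ∨ (k : ℤ) ≤ v x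

section aux
variable {E : Type*} [Field E] {v : E → ℤ} {k : ℕ}
  (hvmul : ∀ x y : E, x ≠ 0 → y ≠ 0 → v (x * y) = v x + v y)
  (hvadd : ∀ x y : E, x ≠ 0 → y ≠ 0 → x + y ≠ 0 → min (v x) (v y) ≤ v (x + y))

include hvmul in
lemma aux_v_one : v 1 = 0 := by
  have h := hvmul 1 1 one_ne_zero one_ne_zero
  simp at h; omega

include hvmul in
lemma aux_v_neg {x : E} (hx : x ≠ 0) : v (-x) = v x := by
  have h1 : v ((-1 : E) * (-1)) = v (-1) + v (-1) := hvmul _ _ (by norm_num) (by norm_num)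
  have h2 : v (1 : E) = 0 := aux_v_one hvmul
  simp at h1
  have h3 : v ((-1 : E) * x) = v (-1) + v x := hvmul _ _ (by norm_num) hx
  rw [neg_one_mul] at h3
  omega

lemma Sm_zero : Sm v k 0 := Or.inl rfl

include hvmul in
lemma Sm_neg {x : E} (hx : Sm v k x) : Sm v k (-x) := by
  by_cases h : x = 0
  · subst h; simp [Sm]
  · rcases hx with h' | h'
    · exact absurd h' h
    · exact Or.inr (by rw [aux_v_neg hvmul h]; exact h')

include hvadd in
lemma Sm_add {x y : E} (hx : Sm v k x) (hy : Sm v k y) : Sm v k (x + y) := by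
  by_cases h0 : x = 0
  · subst h0; simpa using hy
  by_cases h1 : y = 0
  · subst h1; simpa using hx
  by_cases h2 : x + y = 0
  · exact Or.inl h2
  · right
    exact le_trans (le_min (hx.resolve_left h0) (hy.resolve_left h1)) (hvadd x y h0 h1 h2)

include hvmul in
lemma Sm_mul {x y : E} (hx : Sm v k x) (hy : y = 0 ∨ 0 ≤ v y) : Sm v k (x * y) := by
  by_cases h0 : x = 0
  · subst h0; simp [Sm]
  by_cases h1 : y = 0
  · subst h1; simp [Sm]
  · right
    rw [hvmul x y h0 h1]
    have := hx.resolve_left h0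
    have := hy.resolve_left h1
    omega

include hvmul in
lemma Sm_div_unit {x y : E} (hx : Sm v k x) (hy : y ≠ 0) (hvy : v y = 0) :
    Sm v k (x / y) := by
  by_cases h0 : x = 0
  · subst h0; simp [Sm]
  · right
    have hxy : x / y ≠ 0 := div_ne_zero h0 hy
    have : v (x / y * y) = v (x / y) + v y := hvmul _ _ hxy hy
    rw [div_mul_cancel₀ _ hy] at this
    have := hx.resolve_left h0
    omega

include hvmul hvadd in
lemma unit_add_small (hk : 1 ≤ k) {a c : E} (ha : a ≠ 0) (hva : v a = 0)
    (hc : Sm v k c) : a + c ≠ 0 ∧ v (a + c) = 0 := by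
  by_cases h0 : c = 0
  · subst h0; simp [ha, hva]
  have hvc : (k : ℤ) ≤ v c := hc.resolve_left h0
  have hne : a + c ≠ 0 := by
    intro h
    have hc' : c = -a := by linear_combination h
    rw [hc', aux_v_neg hvmul ha, hva] at hvc
    omega
  refine ⟨hne, ?_⟩
  have h1 : min (v a) (v c) ≤ v (a + c) := hvadd a c ha h0 hne
  have h2 : min (v (a + c)) (v (-c)) ≤ v (a + c + -c) := by
    apply hvadd _ _ hne (neg_ne_zero.mpr h0)
    simpa using ha
  rw [aux_v_neg hvmul h0] at h2
  simp only [add_neg_cancel_right] at h2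
  omega

include hvmul in
lemma Sm_of_eq {m d n : E} (h : m * d = n) (hd : d ≠ 0) (hvd : v d = 0)
    (hn : Sm v k n) : Sm v k m := by
  by_cases h0 : n = 0
  · subst h0
    rcases mul_eq_zero.mp h with h' | h'
    · exact Or.inl h'
    · exact absurd h' hd
  have hm : m ≠ 0 := by rintro rfl; simp at h; exact h0 h.symm
  right
  have := hvmul m d hm hd
  rw [h] at this
  have := hn.resolve_left h0
  omega
end aux

/-- With `E = F(√D)` the unramified quadratic extension and
`K̃ = {g ∈ GL₂(O_E) : g ≡ I mod ϖᵏO_E}` (`k ≥ 1`): for `a₁ ∈ Fˣ` and `m ∈ F`,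
`[[1,0],[√D,1]]·[[a₁,m],[0,1]] ∈ B(E)·[[0,1],[−1,−1/√D]]·K̃` iff `a₁ ∈ 1+ϖᵏO_F`
and `m ∈ ϖᵏO_F` (here `1/√D = √D/D`). -/
theorem stmt_18
    (E : Type*) [Field E] (F : Subfield E)
    (v : E → ℤ) (ϖ : E) (q : ℕ) (hq : 2 ≤ q)
    (hϖF : ϖ ∈ F) (hϖ0 : ϖ ≠ 0) (hϖv : v ϖ = 1)
    (hvmul : ∀ x y : E, x ≠ 0 → y ≠ 0 → v (x * y) = v x + v y)
    (hvadd : ∀ x y : E, x ≠ 0 → y ≠ 0 → x + y ≠ 0 → min (v x) (v y) ≤ v (x + y))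
    (hodd : (2 : E) ≠ 0 ∧ v 2 = 0)
    (D sqrtD : E) (hDF : D ∈ F) (hD0 : D ≠ 0) (hDv : v D = 0)
    (hDns : ¬ ∃ y ∈ F, y * y = D)
    (hsq : sqrtD * sqrtD = D)
    (hgen : ∀ x : E, ∃ a ∈ F, ∃ b ∈ F, x = a + b * sqrtD)
    (hinert : ∀ a b : E, a ∈ F → b ∈ F → a ≠ 0 → b ≠ 0 →
        v (a + b * sqrtD) = min (v a) (v b))
    (hOE : ∀ x : E, (x = 0 ∨ 0 ≤ v x) →
        ∃ a ∈ F, ∃ b ∈ F, (a = 0 ∨ 0 ≤ v a) ∧ (b = 0 ∨ 0 ≤ v b) ∧ x = a + b * sqrtD)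
    (k : ℕ) (hk : 1 ≤ k) :
    ∀ a₁ m : E, a₁ ∈ F → m ∈ F → a₁ ≠ 0 →
      ((∃ b kk : Matrix (Fin 2) (Fin 2) E,
          b 1 0 = 0 ∧ b.det ≠ 0 ∧
          (∀ i j, kk i j = 0 ∨ 0 ≤ v (kk i j)) ∧ kk.det ≠ 0 ∧ v kk.det = 0 ∧
          (∀ i j, kk i j - (1 : Matrix (Fin 2) (Fin 2) E) i j = 0 ∨
            (k : ℤ) ≤ v (kk i j - (1 : Matrix (Fin 2) (Fin 2) E) i j)) ∧
          !![1, 0; sqrtD, 1] * !![a₁, m; 0, 1] = b * !![0, 1; -1, -(sqrtD / D)] * kk)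
        ↔ ((a₁ - 1 = 0 ∨ (k : ℤ) ≤ v (a₁ - 1)) ∧ (m = 0 ∨ (k : ℤ) ≤ v m))) := by
  intro a₁ m ha₁F hmF ha₁0
  have hs0 : sqrtD ≠ 0 := by
    intro h; apply hD0; rw [← hsq, h, mul_zero]
  have hv1 : v 1 = 0 := aux_v_one hvmul
  have hvs : v sqrtD = 0 := by
    have := hvmul sqrtD sqrtD hs0 hs0; rw [hsq, hDv] at this; omega
  have hiD : sqrtD / D * sqrtD = 1 := by
    rw [div_mul_eq_mul_div, hsq]; exact div_self hD0
  -- split lemma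
  have hsplit : ∀ a b : E, a ∈ F → b ∈ F → a + b * sqrtD = 0 → a = 0 ∧ b = 0 := by
    intro a b haF hbF h
    by_cases hb : b = 0
    · subst hb; simp at h; exact ⟨h, rfl⟩
    · exfalso
      apply hDns
      refine ⟨-a / b, F.div_mem (F.neg_mem haF) hbF, ?_⟩
      have hs : sqrtD = -a / b := by
        rw [eq_div_iff hb]
        linear_combination h
      rw [← hs, hsq]
  -- decomposition lemma
  have hdec : ∀ e : E, Sm v k e → ∃ x, x ∈ F ∧ ∃ y, y ∈ F ∧
      Sm v k x ∧ Sm v k y ∧ e = x + y * sqrtD := by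
    intro e he
    by_cases h0 : e = 0
    · exact ⟨0, F.zero_mem, 0, F.zero_mem, Or.inl rfl, Or.inl rfl, by rw [h0]; ring⟩
    obtain ⟨a, haF, b, hbF, hab⟩ := hgen e
    have hve : (k : ℤ) ≤ v e := he.resolve_left h0
    refine ⟨a, haF, b, hbF, ?_, ?_, hab⟩
    · by_cases hb : b = 0
      · subst hb; right; simp at hab; rw [← hab]; exact hve
      · by_cases ha : a = 0
        · exact Or.inl ha
        · right
          have := hinert a b haF hbF ha hb
          rw [← hab] at this
          omega
    · by_cases hb : b = 0
      · exact Or.inl hb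
      · right
        by_cases ha : a = 0
        · subst ha
          simp at hab
          have hvb : v (b * sqrtD) = v b + v sqrtD := hvmul b sqrtD hb hs0
          rw [← hab] at hvb
          omega
        · have := hinert a b haF hbF ha hb
          rw [← hab] at this
          omega
  constructor
  · -- forward
    rintro ⟨b, kk, hb10, hdetb, hint, hdetkk, hvdetkk, hsmall, heq⟩
    have h10 := congrFun (congrFun heq 1) 0
    have h11 := congrFun (congrFun heq 1) 1
    simp [Matrix.mul_apply, Fin.sum_univ_two, hb10] at h10 h11
    have Keq : sqrtD * a₁ * (sqrtD * kk 0 1 + kk 1 1)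
        = (sqrtD * m + 1) * (sqrtD * kk 0 0 + kk 1 0) := by
      linear_combination (sqrtD * kk 0 1 + kk 1 1) * h10
        - (sqrtD * kk 0 0 + kk 1 0) * h11
        + b 1 1 * (kk 0 0 * kk 1 1 - kk 0 1 * kk 1 0) * hiD
    -- smallness of entries
    have he00 : Sm v k (kk 0 0 - 1) := by have := hsmall 0 0; simpa [Sm] using this
    have he01 : Sm v k (kk 0 1) := by have := hsmall 0 1; simpa [Sm] using this
    have he10 : Sm v k (kk 1 0) := by have := hsmall 1 0; simpa [Sm] using this
    have he11 : Sm v k (kk 1 1 - 1) := by have := hsmall 1 1; simpa [Sm] using this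
    obtain ⟨x00, hx00F, y00, hy00F, hx00, hy00, hd00⟩ := hdec _ he00
    obtain ⟨x01, hx01F, y01, hy01F, hx01, hy01, hd01⟩ := hdec _ he01
    obtain ⟨x10, hx10F, y10, hy10F, hx10, hy10, hd10⟩ := hdec _ he10
    obtain ⟨x11, hx11F, y11, hy11F, hx11, hy11, hd11⟩ := hdec _ he11
    have hk00 : kk 0 0 = 1 + x00 + y00 * sqrtD := by linear_combination hd00
    have hk01 : kk 0 1 = x01 + y01 * sqrtD := hd01
    have hk10 : kk 1 0 = x10 + y10 * sqrtD := hd10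
    have hk11 : kk 1 1 = 1 + x11 + y11 * sqrtD := by linear_combination hd11
    rw [hk00, hk01, hk10, hk11] at Keq
    have hPQ : (-x10 + D * (a₁ * (x01 + y11) - m * (1 + x00 + y10) - y00))
        + (a₁ * (1 + x11) - m * x10 - (1 + x00 + y10) + D * (a₁ * y01 - m * y00)) * sqrtD
        = 0 := by
      linear_combination Keq
        - ((a₁ * (x01 + y11) - m * (1 + x00 + y10) - y00)
            + (a₁ * y01 - m * y00) * sqrtD) * hsq
    have hPmem : (-x10 + D * (a₁ * (x01 + y11) - m * (1 + x00 + y10) - y00)) ∈ F := by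
      exact F.add_mem (F.neg_mem hx10F)
        (F.mul_mem hDF (F.sub_mem
          (F.sub_mem (F.mul_mem ha₁F (F.add_mem hx01F hy11F))
            (F.mul_mem hmF (F.add_mem (F.add_mem F.one_mem hx00F) hy10F))) hy00F))
    have hQmem : (a₁ * (1 + x11) - m * x10 - (1 + x00 + y10) + D * (a₁ * y01 - m * y00)) ∈ F := by
      exact F.add_mem
        (F.sub_mem (F.sub_mem (F.mul_mem ha₁F (F.add_mem F.one_mem hx11F))
          (F.mul_mem hmF hx10F)) (F.add_mem (F.add_mem F.one_mem hx00F) hy10F))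
        (F.mul_mem hDF (F.sub_mem (F.mul_mem ha₁F hy01F) (F.mul_mem hmF hy00F)))
    obtain ⟨hP, hQ⟩ := hsplit _ _ hPmem hQmem hPQ
    -- now the valuation argument
    have hDint : D = 0 ∨ 0 ≤ v D := Or.inr (le_of_eq hDv.symm)
    have hc2 : Sm v k (x10 + y00 * D) := Sm_add hvadd hx10 (Sm_mul hvmul hy00 hDint)
    have hu : (1 : E) + (x00 + y10) ≠ 0 ∧ v ((1 : E) + (x00 + y10)) = 0 :=
      unit_add_small hvmul hvadd hk one_ne_zero hv1 (Sm_add hvadd hx00 hy10)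
    have ht : (1 : E) + (x11 + y01 * D) ≠ 0 ∧ v ((1 : E) + (x11 + y01 * D)) = 0 :=
      unit_add_small hvmul hvadd hk one_ne_zero hv1
        (Sm_add hvadd hx11 (Sm_mul hvmul hy01 hDint))
    have hQ' : a₁ * ((1 : E) + (x11 + y01 * D)) = ((1 : E) + (x00 + y10)) + m * (x10 + y00 * D) := by
      linear_combination hQ
    have hP' : m * ((1 : E) + (x00 + y10)) * D = a₁ * (x01 + y11) * D - (x10 + y00 * D) := by
      linear_combination -hP
    have hut : ((1 : E) + (x00 + y10)) * ((1 : E) + (x11 + y01 * D)) ≠ 0 ∧ v (((1 : E) + (x00 + y10)) * ((1 : E) + (x11 + y01 * D))) = 0 := by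
      constructor
      · exact mul_ne_zero hu.1 ht.1
      · rw [hvmul _ _ hu.1 ht.1, hu.2, ht.2]; ring
    have hden : ((1 : E) + (x00 + y10)) * ((1 : E) + (x11 + y01 * D)) + -((x01 + y11) * (x10 + y00 * D)) ≠ 0
        ∧ v (((1 : E) + (x00 + y10)) * ((1 : E) + (x11 + y01 * D)) + -((x01 + y11) * (x10 + y00 * D))) = 0 := by
      apply unit_add_small hvmul hvadd hk hut.1 hut.2
      apply Sm_neg hvmul
      apply Sm_mul hvmul (Sm_add hvadd hx01 hy11)
      rcases hc2 with h | h
      · exact Or.inl h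
      · right; omega
    have hdenD : (((1 : E) + (x00 + y10)) * ((1 : E) + (x11 + y01 * D)) + -((x01 + y11) * (x10 + y00 * D))) * D ≠ 0
        ∧ v ((((1 : E) + (x00 + y10)) * ((1 : E) + (x11 + y01 * D)) + -((x01 + y11) * (x10 + y00 * D))) * D) = 0 := by
      refine ⟨mul_ne_zero hden.1 hD0, ?_⟩
      rw [hvmul _ _ hden.1 hD0, hden.2, hDv]; ring
    have hm_small : Sm v k m := by
      apply Sm_of_eq hvmul
        (n := (x01 + y11) * (((1 : E) + (x00 + y10)) * D) + -((x10 + y00 * D) * ((1 : E) + (x11 + y01 * D))))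
        (d := (((1 : E) + (x00 + y10)) * ((1 : E) + (x11 + y01 * D)) + -((x01 + y11) * (x10 + y00 * D))) * D)
        ?_ hdenD.1 hdenD.2 ?_
      · linear_combination ((1 : E) + (x11 + y01 * D)) * hP' + D * (x01 + y11) * hQ'
      · apply Sm_add hvadd
        · apply Sm_mul hvmul (Sm_add hvadd hx01 hy11)
          right
          rw [hvmul ((1 : E) + (x00 + y10)) D hu.1 hD0, hu.2, hDv]; omega
        · apply Sm_neg hvmul
          apply Sm_mul hvmul hc2
          right; exact le_of_eq ht.2.symm
    refine ⟨?_, by exact hm_small⟩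
    have ha_eq : (a₁ - 1) * ((1 : E) + (x11 + y01 * D)) = ((x00 + y10) + -((x11 + y01 * D))) + m * (x10 + y00 * D) := by
      linear_combination hQ'
    have : Sm v k (a₁ - 1) := by
      apply Sm_of_eq hvmul ha_eq ht.1 ht.2
      apply Sm_add hvadd
      · exact Sm_add hvadd (Sm_add hvadd hx00 hy10)
          (Sm_neg hvmul (Sm_add hvadd hx11 (Sm_mul hvmul hy01 hDint)))
      · apply Sm_mul hvmul hm_small
        rcases hc2 with h | h
        · exact Or.inl h
        · right; omega
    exact this
  · -- backward
    rintro ⟨ha1, hm⟩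
    have hva₁ : v a₁ = 0 := by
      have h := unit_add_small hvmul hvadd hk (one_ne_zero (α := E)) hv1 ha1
      have he : (1 : E) + (a₁ - 1) = a₁ := by ring
      rw [he] at h
      exact h.2
    refine ⟨!![-(sqrtD / D), -1; 0, -sqrtD], !![a₁, m; 0, 1], ?_, ?_, ?_, ?_, ?_, ?_, ?_⟩
    · simp
    · rw [Matrix.det_fin_two_of]
      intro h
      apply hs0
      have : sqrtD / D * sqrtD = 0 := by linear_combination h
      rw [hiD] at this
      exact absurd this one_ne_zero
    · intro i j
      fin_cases i <;> fin_cases j <;> simp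
      · exact Or.inr (le_of_eq hva₁.symm)
      · rcases hm with h | h
        · exact Or.inl h
        · exact Or.inr (by omega)
      · exact le_of_eq hv1.symm
    · rw [Matrix.det_fin_two_of]
      simpa using ha₁0
    · rw [Matrix.det_fin_two_of]
      simpa using hva₁
    · intro i j
      fin_cases i <;> fin_cases j <;>
        simp [Matrix.one_apply]
      · exact ha1
      · exact hm
    · have hw : (!![-(sqrtD / D), -1; 0, -sqrtD] : Matrix (Fin 2) (Fin 2) E)
          * !![0, 1; -1, -(sqrtD / D)] = !![1, 0; sqrtD, 1] := by
        ext i j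
        fin_cases i <;> fin_cases j <;>
          simp [Matrix.mul_apply, Fin.sum_univ_two]
        rw [mul_comm, hiD]
      rw [hw]
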